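/- For the 3-dimensional Schwarzschild manifold with mass m > 0, the constant b₀ := ∫₀^∞ t·λ(t) dt, which after the substitution r = F(s) equals (m/2)·∫_m^∞ F(s)/(s³·√(ω(s))) ds with ω(s) = 1 − m/s and F(s) = s·√ω + (m/2)·log((1+√ω)/(1−√ω)), evaluates to (1/3)·(1 + log 4). -/

import Mathlib

open MeasureTheory Real Filter

/-- The antiderivative in the variable `u`. -/
noncomputable def psi (m u : ℝ) : ℝ :=
  (2/3 * u^2 + (2 + 3*u - u^3)/3 * Real.log (1+u) + (2 - 3*u + u^3)/3 * Real.log (1-u)) / m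

lemma psi_hasDerivAt (m u : ℝ) (hu1 : -1 < u) (hu2 : u < 1) :
    HasDerivAt (psi m)
      ((2*u + (1 - u^2) * (Real.log (1+u) - Real.log (1-u))) / m) u := by
  have h1 : (0:ℝ) < 1 + u := by linarith
  have h2 : (0:ℝ) < 1 - u := by linarith
  have d1 : HasDerivAt (fun u : ℝ => (1:ℝ)+u) 1 u := by
    simpa using (hasDerivAt_id u).const_add 1
  have d2 : HasDerivAt (fun u : ℝ => (1:ℝ)-u) (-1) u := by
    simpa using (hasDerivAt_id u).const_sub 1
  have dl1 : HasDerivAt (fun u : ℝ => Real.log (1+u)) (1/(1+u)) u := by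
    simpa using d1.log h1.ne'
  have dl2 : HasDerivAt (fun u : ℝ => Real.log (1-u)) (-1/(1-u)) u := by
    simpa using d2.log h2.ne'
  have dA : HasDerivAt (fun u : ℝ => (2 + 3*u - u^3)/3) ((3 - 3*u^2)/3) u := by
    have h := (((hasDerivAt_id u).const_mul 3).const_add 2).sub (hasDerivAt_pow 3 u)
    have h' := h.div_const 3
    exact h'.congr_deriv (by push_cast; ring)
  have dB : HasDerivAt (fun u : ℝ => (2 - 3*u + u^3)/3) ((-3 + 3*u^2)/3) u := by
    have h := ((hasDerivAt_pow 3 u).add_const 2).sub ((hasDerivAt_id u).const_mul 3)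
    have h' := h.div_const 3
    exact (h'.congr_deriv (by push_cast; ring)).congr_of_eventuallyEq
      (Filter.Eventually.of_forall fun x => by simp only [Pi.sub_apply, id_eq]; ring)
  have dsq : HasDerivAt (fun u : ℝ => 2/3 * u^2) (2/3 * (2*u)) u := by
    have := (hasDerivAt_pow 2 u).const_mul (2/3 : ℝ)
    exact this.congr_deriv (by push_cast; ring)
  have dnum := ((dsq.add (dA.mul dl1)).add (dB.mul dl2)).div_const m
  unfold psi
  refine dnum.congr_deriv (Eq.symm ?_)
  congr 1
  field_simp [h1.ne', h2.ne']
  ring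

theorem stmt_16 (m : ℝ) (hm : 0 < m) :
    (m / 2) * ∫ s in Set.Ioi m,
        (s * Real.sqrt (1 - m / s) +
          (m / 2) * (Real.log (1 + Real.sqrt (1 - m / s)) -
            Real.log (1 - Real.sqrt (1 - m / s)))) /
          (s ^ 3 * Real.sqrt (1 - m / s)) =
      (1 + Real.log 4) / 3 := by
  set G : ℝ → ℝ := fun s => psi m (Real.sqrt (1 - m / s)) with hG
  set h : ℝ → ℝ := fun s =>
    (s * Real.sqrt (1 - m / s) +
      (m / 2) * (Real.log (1 + Real.sqrt (1 - m / s)) -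
        Real.log (1 - Real.sqrt (1 - m / s)))) /
      (s ^ 3 * Real.sqrt (1 - m / s)) with hh
  have hderiv : ∀ s ∈ Set.Ioi m, HasDerivAt G (h s) s := by
    intro s hsm
    rw [Set.mem_Ioi] at hsm
    have hs : 0 < s := hm.trans hsm
    have ht : 0 < 1 - m / s := by
      rw [sub_pos, div_lt_one hs]; exact hsm
    have ht1 : 1 - m / s < 1 := by
      have : 0 < m / s := div_pos hm hs
      linarith
    set u := Real.sqrt (1 - m / s) with hu
    have hu0 : 0 < u := Real.sqrt_pos.mpr ht
    have hu1 : u < 1 := by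
      have := Real.sqrt_lt_sqrt ht.le ht1
      rwa [Real.sqrt_one] at this
    have hu2 : u ^ 2 = 1 - m / s := Real.sq_sqrt ht.le
    have dinner : HasDerivAt (fun s : ℝ => 1 - m / s) (m / s ^ 2) s := by
      have h' := ((hasDerivAt_inv hs.ne').const_mul m).const_sub 1
      simp only [div_eq_mul_inv]
      exact h'.congr_deriv (by ring)
    have dsqrt : HasDerivAt (fun s : ℝ => Real.sqrt (1 - m / s))
        ((m / s ^ 2) / (2 * u)) s := dinner.sqrt ht.ne'
    have dpsi := psi_hasDerivAt m u (by linarith) hu1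
    have dG := dpsi.comp s dsqrt
    have hsu : s * u ^ 2 = s - m := by
      rw [hu2]; field_simp
    refine dG.congr_deriv (Eq.symm ?_)
    rw [hh]
    simp only [← hu]
    clear_value u
    field_simp
    linear_combination ((Real.log (1+u) - Real.log (1-u))) * hsu
  have g'pos : ∀ s ∈ Set.Ioi m, 0 ≤ h s := by
    intro s hsm
    rw [Set.mem_Ioi] at hsm
    have hs : 0 < s := hm.trans hsm
    have ht : 0 < 1 - m / s := by
      rw [sub_pos, div_lt_one hs]; exact hsm
    have ht1 : 1 - m / s < 1 := by
      have : 0 < m / s := div_pos hm hs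
      linarith
    have hu0 : 0 ≤ Real.sqrt (1 - m / s) := Real.sqrt_nonneg _
    have hu1 : Real.sqrt (1 - m / s) < 1 := by
      have := Real.sqrt_lt_sqrt ht.le ht1
      rwa [Real.sqrt_one] at this
    apply div_nonneg _ (by positivity)
    apply add_nonneg (by positivity)
    apply mul_nonneg (by positivity)
    rw [sub_nonneg]
    apply Real.log_le_log (by linarith)
    linarith
  have hcont : ContinuousWithinAt G (Set.Ici m) m := by
    apply ContinuousAt.continuousWithinAt
    have h1 : ContinuousAt (fun s : ℝ => Real.sqrt (1 - m / s)) m := by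
      fun_prop (disch := exact hm.ne')
    have h2 : ContinuousAt (psi m) (Real.sqrt (1 - m / m)) := by
      rw [div_self hm.ne', sub_self, Real.sqrt_zero]
      unfold psi
      fun_prop (disch := norm_num)
    exact ContinuousAt.comp (f := fun s : ℝ => Real.sqrt (1 - m / s)) h2 h1
  have hg : Filter.Tendsto G Filter.atTop (nhds ((2/3 + 4/3 * Real.log 2) / m)) := by
    have hu_lim : Filter.Tendsto (fun s : ℝ => Real.sqrt (1 - m / s))
        Filter.atTop (nhds 1) := by
      have h1 : Filter.Tendsto (fun s : ℝ => 1 - m / s) Filter.atTop (nhds 1) := by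
        simpa using tendsto_const_nhds.sub
          (Filter.Tendsto.div_atTop (tendsto_const_nhds (x := m)) Filter.tendsto_id)
      have := (Real.continuous_sqrt.continuousAt (x := 1)).tendsto.comp h1
      simpa [Function.comp_def] using this
    have hu_lt : ∀ᶠ s : ℝ in Filter.atTop, Real.sqrt (1 - m / s) < 1 := by
      filter_upwards [Filter.eventually_gt_atTop m] with s hsm
      have hs : 0 < s := hm.trans hsm
      have ht1 : 1 - m / s < 1 := by
        have : 0 < m / s := div_pos hm hs
        linarith
      have ht : (0:ℝ) ≤ 1 - m / s := by
        rw [sub_nonneg]; exact (div_le_one hs).mpr hsm.le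
      have := Real.sqrt_lt_sqrt ht ht1
      rwa [Real.sqrt_one] at this
    have hu_w : Filter.Tendsto (fun s : ℝ => Real.sqrt (1 - m / s))
        Filter.atTop (nhdsWithin 1 (Set.Iio 1)) := by
      rw [tendsto_nhdsWithin_iff]
      exact ⟨hu_lim, hu_lt⟩
    have hpsi : Filter.Tendsto (psi m) (nhdsWithin 1 (Set.Iio 1))
        (nhds ((2/3 + 4/3 * Real.log 2) / m)) := by
      have key : Filter.Tendsto (fun x : ℝ => Real.log x * x ^ 2)
          (nhdsWithin 0 (Set.Ioi 0)) (nhds 0) := by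
        have := tendsto_log_mul_rpow_nhdsGT_zero (r := 2) two_pos
        apply this.congr'
        filter_upwards [self_mem_nhdsWithin] with x hx
        rw [show ((2:ℝ)) = ((2:ℕ):ℝ) by norm_num, Real.rpow_natCast]
      have hmap : Filter.Tendsto (fun u : ℝ => 1 - u)
          (nhdsWithin 1 (Set.Iio 1)) (nhdsWithin 0 (Set.Ioi 0)) := by
        rw [tendsto_nhdsWithin_iff]
        constructor
        · apply Filter.Tendsto.mono_left _ nhdsWithin_le_nhds
          have : ContinuousAt (fun u : ℝ => 1 - u) 1 := by fun_prop
          simpa using this.tendsto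
        · filter_upwards [self_mem_nhdsWithin] with x hx
          simp only [Set.mem_Iio] at hx
          simp only [Set.mem_Ioi]
          linarith
      have h3 : Filter.Tendsto (fun u : ℝ => (2 - 3*u + u^3)/3 * Real.log (1-u))
          (nhdsWithin 1 (Set.Iio 1)) (nhds 0) := by
        have hcomp := key.comp hmap
        have hfac : Filter.Tendsto (fun u : ℝ => (2 + u)/3)
            (nhdsWithin 1 (Set.Iio 1)) (nhds 1) := by
          apply Filter.Tendsto.mono_left _ nhdsWithin_le_nhds
          have : ContinuousAt (fun u : ℝ => (2 + u)/3) 1 := by fun_prop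
          have h := this.tendsto
          norm_num at h
          exact h
        have := hfac.mul hcomp
        rw [mul_zero] at this
        apply this.congr
        intro u
        simp only [Function.comp]
        ring
      have h12 : Filter.Tendsto
          (fun u : ℝ => 2/3 * u^2 + (2 + 3*u - u^3)/3 * Real.log (1+u))
          (nhdsWithin 1 (Set.Iio 1)) (nhds (2/3 + 4/3 * Real.log 2)) := by
        apply Filter.Tendsto.mono_left _ nhdsWithin_le_nhds
        have : ContinuousAt
            (fun u : ℝ => 2/3 * u^2 + (2 + 3*u - u^3)/3 * Real.log (1+u)) 1 := by
          fun_prop (disch := norm_num)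
        have h := this.tendsto
        convert h using 2
        norm_num
      have := (h12.add h3).div_const m
      rw [add_zero] at this
      apply this.congr
      intro u
      rw [psi]
    exact hpsi.comp hu_w
  rw [integral_Ioi_of_hasDerivAt_of_nonneg hcont hderiv g'pos hg]
  have hGm : G m = 0 := by
    rw [hG]
    simp only [div_self hm.ne', sub_self, Real.sqrt_zero]
    unfold psi
    norm_num
  rw [hGm]
  have h4 : Real.log 4 = 2 * Real.log 2 := by
    rw [show (4:ℝ) = 2^2 by norm_num, Real.log_pow]
    push_cast; ring
  rw [h4]
  field_simp
  ring
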